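/- Let A_1, …, A_n be nonempty words with R(A_1) ≤ R(A_2) ≤ … ≤ R(A_n) (lexicographic order on infinite periodic words). Then for every permutation π of {1,…,n}, the concatenation A_1A_2⋯A_n is lexicographically less than or equal to A_{π(1)}A_{π(2)}⋯A_{π(n)}. -/

import Mathlib

/-- `wpow A n` is the `n`-fold concatenation `A^n` of the word `A`. -/
def wpow {α : Type*} (A : List α) : ℕ → List α
  | 0 => []
  | n + 1 => A ++ wpow A n


/-- `R A` is the infinite periodic word `AAA⋯`: `R A i = A (i % |A|)`. -/
def R {α : Type*} [Inhabited α] (A : List α) : ℕ → α :=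
  fun i => A.getD (i % A.length) default

/-- Strict lexicographic order on infinite words. -/
def InfLt {α : Type*} [LinearOrder α] (f g : ℕ → α) : Prop :=
  ∃ i, (∀ j < i, f j = g j) ∧ f i < g i

/-- Lexicographic (non-strict) order on infinite words. -/
def InfLe {α : Type*} [LinearOrder α] (f g : ℕ → α) : Prop :=
  f = g ∨ InfLt f g

set_option linter.unusedSectionVars false

namespace StmtAux

variable {α : Type*} [LinearOrder α] [Inhabited α]

/-! ### Basic order facts for `InfLe` -/

lemma inflt_irrefl (f : ℕ → α) : ¬ InfLt f f := by
  rintro ⟨i, -, h⟩; exact lt_irrefl _ h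

lemma inflt_asymm {f g : ℕ → α} (h : InfLt f g) (h' : InfLt g f) : False := by
  obtain ⟨i, hi, hil⟩ := h
  obtain ⟨j, hj, hjl⟩ := h'
  rcases lt_trichotomy i j with hij | rfl | hij
  · exact absurd (hj i hij).symm (ne_of_lt hil)
  · exact absurd hjl (not_lt.2 hil.le)
  · exact absurd (hi j hij) (ne_of_gt hjl)

lemma infle_refl (f : ℕ → α) : InfLe f f := Or.inl rfl

lemma infle_total (f g : ℕ → α) : InfLe f g ∨ InfLe g f := by
  by_cases hfg : f = g
  · exact Or.inl (Or.inl hfg)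
  have hex : ∃ i, f i ≠ g i := by
    by_contra h; push_neg at h; exact hfg (funext h)
  classical
  have hne : f (Nat.find hex) ≠ g (Nat.find hex) := Nat.find_spec hex
  have hagree : ∀ j < Nat.find hex, f j = g j := fun j hj => by
    by_contra hc; exact absurd (Nat.find_min hex hj) (by simp [hc])
  rcases hne.lt_or_gt with h | h
  · exact Or.inl (Or.inr ⟨_, hagree, h⟩)
  · exact Or.inr (Or.inr ⟨_, fun j hj => (hagree j hj).symm, h⟩)

lemma infle_of_not_infle {f g : ℕ → α} (h : ¬ InfLe f g) : InfLt g f := by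
  rcases infle_total f g with h' | h'
  · exact absurd h' h
  · rcases h' with heq | hlt
    · exact absurd (Or.inl heq.symm) h
    · exact hlt

lemma inflt_trans {f g k : ℕ → α} : InfLt f g → InfLt g k → InfLt f k := by
  rintro ⟨i, hi, hil⟩ ⟨j, hj, hjl⟩
  rcases lt_trichotomy i j with hij | rfl | hij
  · exact ⟨i, fun l hl => (hi l hl).trans (hj l (hl.trans hij)),
      by rw [← hj i hij]; exact hil⟩
  · exact ⟨i, fun l hl => (hi l hl).trans (hj l hl), hil.trans hjl⟩
  · exact ⟨j, fun l hl => (hi l (hl.trans hij)).trans (hj l hl),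
      by rw [hi j hij]; exact hjl⟩

lemma infle_trans {f g k : ℕ → α} : InfLe f g → InfLe g k → InfLe f k := by
  rintro (rfl | h1) (rfl | h2)
  · exact Or.inl rfl
  · exact Or.inr h2
  · exact Or.inr h1
  · exact Or.inr (inflt_trans h1 h2)

lemma infle_antisymm {f g : ℕ → α} (h : InfLe f g) (h' : InfLe g f) : f = g := by
  rcases h with rfl | h1
  · rfl
  rcases h' with rfl | h2
  · rfl
  · exact absurd (inflt_asymm h1 h2) (by simp)

/-! ### Prepending a finite word to an infinite word -/

/-- `capp u s` is the infinite word `u · s`. -/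
def capp (u : List α) (s : ℕ → α) : ℕ → α :=
  fun i => if h : i < u.length then u[i] else s (i - u.length)

lemma capp_lt {u : List α} {s : ℕ → α} {i : ℕ} (h : i < u.length) :
    capp u s i = u[i] := by simp [capp, h]

lemma capp_ge {u : List α} {s : ℕ → α} {i : ℕ} (h : u.length ≤ i) :
    capp u s i = s (i - u.length) := by
  simp [capp, Nat.not_lt.2 h]

lemma capp_nil (s : ℕ → α) : capp ([] : List α) s = s := by
  funext i; simp [capp]

lemma capp_append (u v : List α) (s : ℕ → α) :
    capp (u ++ v) s = capp u (capp v s) := by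
  funext i
  by_cases h1 : i < u.length
  · rw [capp_lt (by simp; omega), capp_lt h1, List.getElem_append_left h1]
  · push_neg at h1
    rw [capp_ge h1]
    by_cases h2 : i < u.length + v.length
    · rw [capp_lt (by simp; omega), capp_lt (by omega),
        List.getElem_append_right h1]
    · rw [capp_ge (by simp; omega), capp_ge (by omega)]
      congr 1
      simp; omega

lemma capp_R {A : List α} (hA : A ≠ []) : capp A (R A) = R A := by
  have hm : 0 < A.length := List.length_pos_iff.mpr hA
  funext i
  by_cases h : i < A.length
  · rw [capp_lt h]
    simp only [R]
    rw [Nat.mod_eq_of_lt h, List.getD_eq_getElem _ _ h]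
  · push_neg at h
    rw [capp_ge h]
    simp only [R]
    rw [Nat.mod_eq_sub_mod h]

lemma infle_capp_mono {s t : ℕ → α} (u : List α) (h : InfLe s t) :
    InfLe (capp u s) (capp u t) := by
  rcases h with rfl | ⟨i, hag, hil⟩
  · exact Or.inl rfl
  refine Or.inr ⟨u.length + i, fun j hj => ?_, ?_⟩
  · by_cases hju : j < u.length
    · rw [capp_lt hju, capp_lt hju]
    · push_neg at hju
      rw [capp_ge hju, capp_ge hju]
      exact hag _ (by omega)
  · rw [capp_ge (by omega), capp_ge (by omega)]
    simpa using hil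

lemma wpow_length (A : List α) (k : ℕ) : (wpow A k).length = k * A.length := by
  induction k with
  | zero => simp [wpow]
  | succ k ih => simp [wpow, ih, Nat.succ_mul, Nat.add_comm]

lemma capp_wpow_R {A : List α} (hA : A ≠ []) (k : ℕ) :
    capp (wpow A k) (R A) = R A := by
  induction k with
  | zero => simp [wpow, capp_nil]
  | succ k ih => rw [wpow, capp_append, ih, capp_R hA]

/-! ### The key equivalences `x·s ≤ s ↔ x^∞ ≤ s` and `s ≤ x·s ↔ s ≤ x^∞` -/

lemma chain_le {x : List α} {s : ℕ → α} (h : InfLe (capp x s) s) :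
    ∀ k, InfLe (capp (wpow x k) s) s := by
  intro k
  induction k with
  | zero => rw [wpow, capp_nil]; exact infle_refl s
  | succ k ih =>
    rw [wpow, capp_append]
    exact infle_trans (infle_capp_mono x ih) h

lemma chain_ge {x : List α} {s : ℕ → α} (h : InfLe s (capp x s)) :
    ∀ k, InfLe s (capp (wpow x k) s) := by
  intro k
  induction k with
  | zero => rw [wpow, capp_nil]; exact infle_refl s
  | succ k ih =>
    rw [wpow, capp_append]
    exact infle_trans h (infle_capp_mono x ih)

lemma capp_wpow_agree {x : List α} (hx : x ≠ []) (s : ℕ → α) {k j : ℕ}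
    (hj : j < (wpow x k).length) : capp (wpow x k) s j = R x j := by
  rw [capp_lt hj, ← capp_wpow_R hx k, capp_lt hj]

lemma G_forward {x : List α} {s : ℕ → α} (hx : x ≠ []) (h : InfLe (capp x s) s) :
    InfLe (R x) s := by
  by_contra hc
  obtain ⟨i, hag, hil⟩ := infle_of_not_infle hc
  have hm : 0 < x.length := List.length_pos_iff.mpr hx
  have hlen : i < (wpow x (i + 1)).length := by
    rw [wpow_length]; nlinarith
  have hkey : ∀ j ≤ i, capp (wpow x (i + 1)) s j = R x j := fun j hj =>
    capp_wpow_agree hx s (lt_of_le_of_lt hj hlen)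
  have hlt : InfLt s (capp (wpow x (i + 1)) s) :=
    ⟨i, fun j hj => (hag j hj).trans (hkey j hj.le).symm,
      by rw [hkey i le_rfl]; exact hil⟩
  rcases chain_le h (i + 1) with heq | hlt'
  · rw [heq] at hlt; exact inflt_irrefl s hlt
  · exact inflt_asymm hlt hlt'

lemma G'_forward {x : List α} {s : ℕ → α} (hx : x ≠ []) (h : InfLe s (capp x s)) :
    InfLe s (R x) := by
  by_contra hc
  obtain ⟨i, hag, hil⟩ := infle_of_not_infle hc
  have hm : 0 < x.length := List.length_pos_iff.mpr hx
  have hlen : i < (wpow x (i + 1)).length := by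
    rw [wpow_length]; nlinarith
  have hkey : ∀ j ≤ i, capp (wpow x (i + 1)) s j = R x j := fun j hj =>
    capp_wpow_agree hx s (lt_of_le_of_lt hj hlen)
  have hlt : InfLt (capp (wpow x (i + 1)) s) s :=
    ⟨i, fun j hj => (hkey j hj.le).trans (hag j hj),
      by rw [hkey i le_rfl]; exact hil⟩
  rcases chain_ge h (i + 1) with heq | hlt'
  · rw [← heq] at hlt; exact inflt_irrefl s hlt
  · exact inflt_asymm hlt hlt'

lemma G_backward {x : List α} {s : ℕ → α} (hx : x ≠ []) (h : InfLe (R x) s) :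
    InfLe (capp x s) s := by
  by_contra hc
  have hlt : InfLt s (capp x s) := infle_of_not_infle hc
  have h2 : InfLe s (R x) := G'_forward hx (Or.inr hlt)
  have heq : s = R x := infle_antisymm h2 h
  rw [heq, capp_R hx] at hlt
  exact inflt_irrefl _ hlt

lemma G'_backward {x : List α} {s : ℕ → α} (hx : x ≠ []) (h : InfLe s (R x)) :
    InfLe s (capp x s) := by
  by_contra hc
  have hlt : InfLt (capp x s) s := infle_of_not_infle hc
  have h2 : InfLe (R x) s := G_forward hx (Or.inr hlt)
  have heq : s = R x := infle_antisymm h h2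
  rw [heq, capp_R hx] at hlt
  exact inflt_irrefl _ hlt

/-- The central chain: `R x ≤ R y` implies `x · (yx)^∞ ≤ (yx)^∞`. -/
lemma core {x y : List α} (hx : x ≠ []) (hy : y ≠ [])
    (h : InfLe (R x) (R y)) :
    InfLe (capp x (R (y ++ x))) (R (y ++ x)) := by
  have hyx : y ++ x ≠ [] := by simp [hy]
  have c1 : InfLe (R x) (capp y (R x)) := G'_backward hy h
  have c2 : capp (y ++ x) (R x) = capp y (R x) := by
    rw [capp_append, capp_R hx]
  have c3 : InfLe (R x) (R (y ++ x)) := G'_forward hyx (by rw [c2]; exact c1)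
  exact G_backward hx c3

/-! ### Finite lexicographic order facts -/

lemma lex_of_getD : ∀ {u v : List α}, u.length = v.length →
    ∀ i, i < u.length → (∀ j < i, u.getD j default = v.getD j default) →
    u.getD i default < v.getD i default → u < v := by
  intro u
  induction u with
  | nil => intro v _ i hi; exact absurd hi (by simp)
  | cons a u ih =>
    intro v hlen i hi hag hlt
    match v with
    | [] => simp at hlen
    | b :: v =>
      match i with
      | 0 =>
        simp only [List.getD_cons_zero] at hlt
        exact (List.Lex.rel hlt : List.Lex (· < ·) (a :: u) (b :: v))
      | i + 1 =>
        have hab : a = b := by simpa using hag 0 (Nat.succ_pos i)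
        subst hab
        have h' : u < v := by
          refine ih (by simpa using hlen) i (by simpa using hi)
            (fun j hj => ?_) (by simpa using hlt)
          simpa using hag (j + 1) (by omega)
        exact (List.Lex.cons h' : List.Lex (· < ·) (a :: u) (a :: v))

lemma eq_of_getD {u v : List α} (hlen : u.length = v.length)
    (h : ∀ j < u.length, u.getD j default = v.getD j default) : u = v := by
  refine List.ext_getElem hlen fun i h1 h2 => ?_
  have := h i h1
  rwa [List.getD_eq_getElem _ _ h1, List.getD_eq_getElem _ _ h2] at this

lemma le_append_left {u v : List α} (h : u ≤ v) (p : List α) :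
    p ++ u ≤ p ++ v := by
  induction p with
  | nil => simpa
  | cons a p ih => exact List.cons_le_cons a ih

lemma lex_append {s : List α} : ∀ {u v : List α}, List.Lex (· < ·) u v →
    u.length = v.length → List.Lex (· < ·) (u ++ s) (v ++ s) := by
  intro u v h
  induction h with
  | nil => intro hlen; simp at hlen
  | @cons a l₁ l₂ h ih =>
    intro hlen
    exact List.Lex.cons (ih (by simpa using hlen))
  | rel h => intro _; exact List.Lex.rel h

lemma append_le_append_right {u v : List α} (h : u ≤ v)
    (hlen : u.length = v.length) (s : List α) : u ++ s ≤ v ++ s := by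
  rcases lt_or_eq_of_le h with hlt | rfl
  · exact le_of_lt (lex_append (hlt : List.Lex (· < ·) u v) hlen)
  · exact le_rfl

/-! ### `R x ≤ R y` implies `x ++ y ≤ y ++ x` -/

lemma append_le_of_infle {x y : List α} (hx : x ≠ []) (hy : y ≠ [])
    (h : InfLe (R x) (R y)) : x ++ y ≤ y ++ x := by
  have h4 := core hx hy h
  set m := x.length with hm
  set n := y.length with hn
  have hm0 : 0 < m := List.length_pos_iff.mpr hx
  have hlen : (x ++ y).length = (y ++ x).length := by simp [Nat.add_comm]
  have hxylen : (x ++ y).length = m + n := by simp [hm, hn]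
  have hf : ∀ j < m + n, capp x (R (y ++ x)) j = (x ++ y).getD j default := by
    intro j hj
    by_cases hjm : j < m
    · rw [capp_lt hjm, List.getD_eq_getElem _ _ (by simp; omega),
        List.getElem_append_left hjm]
    · push_neg at hjm
      rw [capp_ge hjm]
      have hjmn : j - m < n := by omega
      simp only [R]
      rw [Nat.mod_eq_of_lt (by simp; omega),
        List.getD_eq_getElem _ _ (by simp; omega),
        List.getD_eq_getElem _ _ (by simp; omega),
        List.getElem_append_left (by omega),
        List.getElem_append_right hjm]
  have hg : ∀ j < m + n, R (y ++ x) j = (y ++ x).getD j default := by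
    intro j hj
    simp only [R]
    rw [Nat.mod_eq_of_lt (by simp; omega)]
  rcases h4 with heq | ⟨i, hag, hil⟩
  · refine le_of_eq (eq_of_getD hlen fun j hj => ?_)
    rw [hxylen] at hj
    rw [← hf j hj, ← hg j hj, heq]
  · by_cases hi : i < m + n
    · refine le_of_lt (lex_of_getD hlen i (by omega) (fun j hj => ?_) ?_)
      · rw [← hf j (by omega), ← hg j (by omega), hag j hj]
      · rw [← hf i hi, ← hg i hi]; exact hil
    · refine le_of_eq (eq_of_getD hlen fun j hj => ?_)
      rw [hxylen] at hj
      rw [← hf j hj, ← hg j hj, hag j (by omega)]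

/-! ### Sorting argument on joins -/

lemma move_front {a : List α} : ∀ {P : List (List α)},
    (∀ p ∈ P, a ++ p ≤ p ++ a) → a ++ P.flatten ≤ P.flatten ++ a := by
  intro P
  induction P with
  | nil => intro _; simp
  | cons p P ih =>
    intro hP
    have h1 : a ++ p ≤ p ++ a := hP p (by simp)
    have h2 : a ++ P.flatten ≤ P.flatten ++ a := ih fun q hq => hP q (by simp [hq])
    calc a ++ (p :: P).flatten = (a ++ p) ++ P.flatten := by
            simp [List.append_assoc]
      _ ≤ (p ++ a) ++ P.flatten :=
            append_le_append_right h1 (by simp [Nat.add_comm]) _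
      _ = p ++ (a ++ P.flatten) := by simp [List.append_assoc]
      _ ≤ p ++ (P.flatten ++ a) := le_append_left h2 _
      _ = (p :: P).flatten ++ a := by simp [List.append_assoc]

lemma join_le_join_perm : ∀ (L M : List (List α)), M.Perm L →
    L.Pairwise (fun u v => u ++ v ≤ v ++ u) → L.flatten ≤ M.flatten := by
  intro L
  induction L with
  | nil => intro M hM _; rw [hM.eq_nil]
  | cons a L ih =>
    intro M hM hpair
    have ha : a ∈ M := hM.mem_iff.mpr (by simp)
    obtain ⟨P, S, rfl⟩ := List.append_of_mem ha
    have hPS : (P ++ S).Perm L :=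
      ((List.perm_middle.symm.trans hM)).cons_inv
    rw [List.pairwise_cons] at hpair
    obtain ⟨haL, hLpair⟩ := hpair
    have hmemP : ∀ p ∈ P, a ++ p ≤ p ++ a := by
      intro p hp
      have : p ∈ a :: L := hM.subset (by simp [hp])
      rcases List.mem_cons.mp this with rfl | hpL
      · exact le_rfl
      · exact haL p hpL
    have hIH : L.flatten ≤ (P ++ S).flatten := ih (P ++ S) hPS hLpair
    calc (a :: L).flatten = a ++ L.flatten := by simp
      _ ≤ a ++ (P ++ S).flatten := le_append_left hIH a
      _ = (a ++ P.flatten) ++ S.flatten := by simp [List.append_assoc]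
      _ ≤ (P.flatten ++ a) ++ S.flatten := by
            refine append_le_append_right (move_front hmemP)
              (by simp [Nat.add_comm]) _
      _ = (P ++ a :: S).flatten := by simp [List.append_assoc]

end StmtAux

theorem stmt10 {α : Type*} [LinearOrder α] [Inhabited α] (n : ℕ) (A : Fin n → List α)
    (hne : ∀ i, A i ≠ [])
    (hsorted : ∀ i j : Fin n, i ≤ j → InfLe (R (A i)) (R (A j)))
    (π : Equiv.Perm (Fin n)) :
    (List.ofFn A).flatten ≤ (List.ofFn fun i => A (π i)).flatten := by
  have hperm : (List.ofFn fun i => A (π i)).Perm (List.ofFn A) :=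
    π.ofFn_comp_perm A
  have hpair : (List.ofFn A).Pairwise (fun u v => u ++ v ≤ v ++ u) := by
    rw [List.pairwise_ofFn]
    intro i j hij
    exact StmtAux.append_le_of_infle (hne i) (hne j) (hsorted i j hij.le)
  exact StmtAux.join_le_join_perm _ _ hperm hpair
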